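/- Given n, p, β with 0 < β ≤ pn/400, every n-vertex (p,β)-bijumbled graph with minimum degree at least 4√(pβn) is an (n, d_1)-expander for d_1 = pn/(4β). -/

import Mathlib

/-- The external neighbourhood `N_G(X) = (⋃_{v ∈ X} N_G(v)) \ X`. -/
def extN {V : Type*} (G : SimpleGraph V) (X : Set V) : Set V :=
  (⋃ v ∈ X, G.neighborSet v) \ X

/-- The number of adjacent (ordered) pairs in `X × Y`; this counts each edge with both
endpoints in `X ∩ Y` twice. -/
noncomputable def eCount {V : Type*} (G : SimpleGraph V) (X Y : Set V) : ℕ :=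
  {p : V × V | p.1 ∈ X ∧ p.2 ∈ Y ∧ G.Adj p.1 p.2}.ncard

/-- `G` is `(p,β)`-bijumbled: for all vertex sets `X, Y` we have
`|e_G(X,Y) − p|X||Y|| ≤ β √(|X||Y|)`. -/
def Bijumbled {V : Type*} (G : SimpleGraph V) (p β : ℝ) : Prop :=
  ∀ X Y : Set V,
    |(eCount G X Y : ℝ) - p * X.ncard * Y.ncard| ≤ β * Real.sqrt (X.ncard * Y.ncard)

/-- `G` is an `(n,d)`-expander: (i) `|N_G(X)| ≥ d|X|` for all `X` with `1 ≤ |X| < n/(2d)`,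
and (ii) `e_G(X,Y) > 0` for all disjoint `X, Y` with `|X| = |Y| ≥ n/(2d)`. -/
def IsExpander (n : ℕ) (d : ℝ) (G : SimpleGraph (Fin n)) : Prop :=
  (∀ X : Set (Fin n), 1 ≤ X.ncard → (X.ncard : ℝ) < n / (2 * d) →
      d * X.ncard ≤ ((extN G X).ncard : ℝ)) ∧
  (∀ X Y : Set (Fin n), Disjoint X Y → X.ncard = Y.ncard →
      (n / (2 * d) : ℝ) ≤ X.ncard → 0 < eCount G X Y)

lemma eCount_union_extN {n : ℕ} (G : SimpleGraph (Fin n)) (X : Set (Fin n)) :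
    eCount G X (X ∪ extN G X) = ∑ u ∈ X.toFinite.toFinset, (G.neighborSet u).ncard := by
  classical
  have hset : {q : Fin n × Fin n | q.1 ∈ X ∧ q.2 ∈ X ∪ extN G X ∧ G.Adj q.1 q.2}
      = ↑(X.toFinite.toFinset.biUnion
          (fun u => {u} ×ˢ (G.neighborSet u).toFinite.toFinset)) := by
    ext ⟨u, v⟩
    simp only [Set.mem_setOf_eq, Finset.coe_biUnion, Set.mem_iUnion, Finset.mem_coe,
      Finset.mem_product, Finset.mem_singleton, Set.Finite.mem_toFinset,
      SimpleGraph.mem_neighborSet]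
    constructor
    · rintro ⟨h1, _, h3⟩
      exact ⟨u, h1, rfl, h3⟩
    · rintro ⟨w, hw, rfl, hadj⟩
      refine ⟨hw, ?_, hadj⟩
      by_cases hv : v ∈ X
      · exact Or.inl hv
      · exact Or.inr ⟨Set.mem_biUnion hw hadj, hv⟩
  rw [eCount, hset, Set.ncard_coe_finset, Finset.card_biUnion]
  · refine Finset.sum_congr rfl fun u _ => ?_
    rw [Finset.card_product, Finset.card_singleton, one_mul,
      Set.ncard_eq_toFinset_card _ (G.neighborSet u).toFinite]
  · intro a _ b _ hab
    rw [Function.onFun, Finset.disjoint_left]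
    rintro ⟨u, v⟩ ha hb
    rw [Finset.mem_product, Finset.mem_singleton] at ha hb
    exact hab (ha.1 ▸ hb.1 ▸ rfl)

lemma eCount_diff_zero {n : ℕ} (G : SimpleGraph (Fin n)) (X : Set (Fin n)) :
    eCount G X (Set.univ \ (X ∪ extN G X)) = 0 := by
  have hset : {q : Fin n × Fin n | q.1 ∈ X ∧
      q.2 ∈ Set.univ \ (X ∪ extN G X) ∧ G.Adj q.1 q.2} = ∅ := by
    ext ⟨u, v⟩
    simp only [Set.mem_setOf_eq, Set.mem_diff, Set.mem_univ, true_and,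
      Set.mem_empty_iff_false, iff_false, not_and]
    intro h1 h2 h3
    apply h2
    by_cases hv : v ∈ X
    · exact Or.inl hv
    · exact Or.inr ⟨Set.mem_biUnion h1 h3, hv⟩
  rw [eCount, hset, Set.ncard_empty]

lemma caseI_arith (p β n x y : ℝ) (hp : 0 < p) (hβ : 0 < β) (hpn : 400 * β ≤ p * n)
    (hn0 : 0 < n) (hx1 : 1 ≤ x) (hpx : p * x ≤ 2 * β)
    (hyb : p ^ 2 * (x * y) ≤ β ^ 2) (hcase : 4 * β ^ 2 ≤ p ^ 2 * n * x) (hy0 : 0 ≤ y) :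
    p * n / (4 * β) * x ≤ n - x - y := by
  have hx0 : (0:ℝ) < x := lt_of_lt_of_le one_pos hx1
  have hpx2 : (0:ℝ) < p ^ 2 * x := mul_pos (pow_pos hp 2) hx0
  have key : (p ^ 2 * x) * (4 * y) ≤ (p ^ 2 * x) * n := by nlinarith [hyb, hcase]
  have h4y : 4 * y ≤ n := le_of_mul_le_mul_left key hpx2
  rw [div_mul_eq_mul_div, div_le_iff₀ (by linarith : (0:ℝ) < 4 * β)]
  have hsuff : p * (p * n * x) ≤ p * ((n - x - y) * (4 * β)) := by
    have a1 : (p * n) * (p * x) ≤ (p * n) * (2 * β) :=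
      mul_le_mul_of_nonneg_left hpx (by nlinarith)
    have a2 : (4 * β) * (p * x) ≤ (4 * β) * (2 * β) :=
      mul_le_mul_of_nonneg_left hpx (by linarith)
    have a3 : (400 * β) * β ≤ (p * n) * β := mul_le_mul_of_nonneg_right hpn hβ.le
    have a4 : (β * p) * (4 * y) ≤ (β * p) * n :=
      mul_le_mul_of_nonneg_left h4y (by nlinarith)
    nlinarith [a1, a2, a3, a4]
  exact le_of_mul_le_mul_left hsuff hp

lemma caseII_arith (p β n x s e : ℝ) (hp : 0 < p) (hβ : 0 < β) (hn0 : 0 < n)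
    (hpn : 400 * β ≤ p * n) (hx1 : 1 ≤ x) (hcase : p ^ 2 * n * x ≤ 4 * β ^ 2)
    (hs0 : 0 ≤ s) (hs2 : 2 * β * s ≤ p * n * x)
    (hA : 4 * Real.sqrt (p * β * n) * x ≤ e)
    (hB : e ≤ p * x * s + β * Real.sqrt (x * s)) : False := by
  have hx0 : (0:ℝ) < x := lt_of_lt_of_le one_pos hx1
  have hpβn : (0:ℝ) < p * β * n := mul_pos (mul_pos hp hβ) hn0
  have hR0 : 0 < Real.sqrt (p * β * n) := Real.sqrt_pos.mpr hpβn
  set R : ℝ := Real.sqrt (p * β * n) with hRdef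
  have hD : β * Real.sqrt (x * s) ≤ R * x := by
    have h1 : β ^ 2 * (x * s) ≤ p * β * n * x ^ 2 := by
      have := mul_le_mul_of_nonneg_left hs2
        (mul_nonneg hβ.le hx0.le : (0:ℝ) ≤ β * x)
      nlinarith [hpβn, sq_nonneg x]
    calc β * Real.sqrt (x * s) = Real.sqrt (β ^ 2) * Real.sqrt (x * s) := by
          rw [Real.sqrt_sq hβ.le]
      _ = Real.sqrt (β ^ 2 * (x * s)) := (Real.sqrt_mul (sq_nonneg β) _).symm
      _ ≤ Real.sqrt (p * β * n * x ^ 2) := Real.sqrt_le_sqrt h1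
      _ = Real.sqrt (p * β * n) * Real.sqrt (x ^ 2) := Real.sqrt_mul hpβn.le _
      _ = R * x := by rw [Real.sqrt_sq hx0.le]
  have hE : p * x * s ≤ 2 * β * x := by
    have k1 : (p * x) * (2 * β * s) ≤ (p * x) * (p * n * x) :=
      mul_le_mul_of_nonneg_left hs2 (mul_nonneg hp.le hx0.le)
    have k2 : p ^ 2 * n * x * x ≤ 4 * β ^ 2 * x :=
      mul_le_mul_of_nonneg_right hcase hx0.le
    have k3 : 2 * β * (p * x * s) ≤ 2 * β * (2 * β * x) := by nlinarith [k1, k2]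
    exact le_of_mul_le_mul_left k3 (by linarith)
  have hβR : β ≤ R := by
    calc β = Real.sqrt (β ^ 2) := (Real.sqrt_sq hβ.le).symm
      _ ≤ Real.sqrt (p * β * n) := Real.sqrt_le_sqrt (by nlinarith)
  have h2βx : 2 * β * x ≤ 2 * R * x := by nlinarith [hβR, hx0]
  have hRx : 0 < R * x := mul_pos hR0 hx0
  linarith

/-- Given `0 < β ≤ pn/400`, every `n`-vertex `(p,β)`-bijumbled graph with minimum degree
at least `4√(pβn)` is an `(n, pn/(4β))`-expander. -/
theorem stmt4 (n : ℕ) (p β : ℝ) (hβ : 0 < β) (hβ' : β ≤ p * n / 400)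
    (G : SimpleGraph (Fin n)) (hjumbled : Bijumbled G p β)
    (hmin : ∀ v, 4 * Real.sqrt (p * β * n) ≤ ((G.neighborSet v).ncard : ℝ)) :
    IsExpander n (p * n / (4 * β)) G := by
  classical
  have hpn : 400 * β ≤ p * n := by linarith
  have hpn0 : (0:ℝ) < p * n := lt_of_lt_of_le (by linarith) hpn
  have hn0 : (0:ℝ) < n := by
    rcases (Nat.cast_nonneg n : (0:ℝ) ≤ n).lt_or_eq with h | h
    · exact h
    · exfalso; rw [← h, mul_zero] at hpn0; exact lt_irrefl 0 hpn0
  have hp : 0 < p := by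
    by_contra h
    push_neg at h
    nlinarith
  have hpne : p ≠ 0 := hp.ne'
  have hβne : β ≠ 0 := hβ.ne'
  have hnne : (n:ℝ) ≠ 0 := hn0.ne'
  have hd100 : (100:ℝ) ≤ p * n / (4 * β) := by
    rw [le_div_iff₀ (by linarith : (0:ℝ) < 4 * β)]; linarith
  have hhalf : (n:ℝ) / (2 * (p * n / (4 * β))) = 2 * β / p := by
    field_simp
    ring
  constructor
  · -- part (i): expansion
    intro X h1 h2
    rw [hhalf] at h2
    have hx1 : (1:ℝ) ≤ (X.ncard : ℝ) := by exact_mod_cast h1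
    have hpx : p * (X.ncard : ℝ) < 2 * β := by
      have := (lt_div_iff₀ hp).mp h2
      linarith
    have hdisj1 : Disjoint X (extN G X) := disjoint_sdiff_self_right
    have hsumS : (((X ∪ extN G X)).ncard : ℝ) = (X.ncard : ℝ) + ((extN G X).ncard : ℝ) := by
      rw [Set.ncard_union_eq hdisj1 X.toFinite (extN G X).toFinite]
      push_cast
      ring
    have ht0 : (0:ℝ) ≤ ((extN G X).ncard : ℝ) := Nat.cast_nonneg _
    by_cases hcase : 4 * β ^ 2 ≤ p ^ 2 * n * (X.ncard : ℝ)
    · -- Case I: X not too small; use the complement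
      have hj := hjumbled X (Set.univ \ (X ∪ extN G X))
      rw [eCount_diff_zero G X] at hj
      have hy0 : (0:ℝ) ≤ ((Set.univ \ (X ∪ extN G X)).ncard : ℝ) := Nat.cast_nonneg _
      have hj' : p * (X.ncard : ℝ) * ((Set.univ \ (X ∪ extN G X)).ncard : ℝ)
          ≤ β * Real.sqrt ((X.ncard : ℝ) * ((Set.univ \ (X ∪ extN G X)).ncard : ℝ)) := by
        have h' := (abs_le.mp hj).1
        push_cast at h'
        linarith
      have hyb : p ^ 2 * ((X.ncard : ℝ) * ((Set.univ \ (X ∪ extN G X)).ncard : ℝ)) ≤ β ^ 2 := by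
        rcases eq_or_lt_of_le hy0 with h | h
        · rw [← h, mul_zero, mul_zero]
          positivity
        · set w : ℝ := Real.sqrt ((X.ncard : ℝ) * ((Set.univ \ (X ∪ extN G X)).ncard : ℝ))
            with hwdef
          have hxy0 : (0:ℝ) < (X.ncard : ℝ) * ((Set.univ \ (X ∪ extN G X)).ncard : ℝ) :=
            mul_pos (by linarith) h
          have hw2 : w ^ 2 = (X.ncard : ℝ) * ((Set.univ \ (X ∪ extN G X)).ncard : ℝ) :=
            Real.sq_sqrt hxy0.le
          have hw0 : 0 < w := Real.sqrt_pos.mpr hxy0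
          have hpw : p * w ≤ β := by
            have hh : p * w * w ≤ β * w := by nlinarith [hj', hw2]
            exact le_of_mul_le_mul_right hh hw0
          nlinarith [hpw, hw2, hw0]
      have hunion : X ∪ extN G X ∪ (Set.univ \ (X ∪ extN G X)) = Set.univ :=
        Set.union_diff_cancel (Set.subset_univ _)
      have hdisj2 : Disjoint (X ∪ extN G X) (Set.univ \ (X ∪ extN G X)) :=
        disjoint_sdiff_self_right
      have hpart : (n:ℝ) = (X.ncard : ℝ) + ((extN G X).ncard : ℝ)
          + ((Set.univ \ (X ∪ extN G X)).ncard : ℝ) := by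
        have h1' : ((Set.univ : Set (Fin n)).ncard : ℝ) = n := by
          rw [Set.ncard_univ]; simp
        rw [← hunion, Set.ncard_union_eq hdisj2 (X ∪ extN G X).toFinite
          (Set.univ \ (X ∪ extN G X)).toFinite] at h1'
        push_cast at h1'
        rw [hsumS] at h1'
        linarith
      have harith := caseI_arith p β n (X.ncard : ℝ)
        ((Set.univ \ (X ∪ extN G X)).ncard : ℝ) hp hβ hpn hn0 hx1 hpx.le hyb hcase hy0
      linarith
    · -- Case II: X small; use minimum degree
      push_neg at hcase
      by_contra hcon
      push_neg at hcon
      have hs0 : (0:ℝ) ≤ (((X ∪ extN G X)).ncard : ℝ) := Nat.cast_nonneg _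
      have hxd : (X.ncard : ℝ) ≤ p * n / (4 * β) * (X.ncard : ℝ) :=
        le_mul_of_one_le_left (by linarith) (by linarith)
      have hsle : (((X ∪ extN G X)).ncard : ℝ) ≤ 2 * (p * n / (4 * β)) * (X.ncard : ℝ) := by
        rw [hsumS]
        linarith
      have hs2 : 2 * β * (((X ∪ extN G X)).ncard : ℝ) ≤ p * n * (X.ncard : ℝ) := by
        have heq : 2 * β * (2 * (p * n / (4 * β)) * (X.ncard : ℝ)) = p * n * (X.ncard : ℝ) := by
          field_simp
          ring
        have := mul_le_mul_of_nonneg_left hsle (by linarith : (0:ℝ) ≤ 2 * β)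
        linarith
      have hA : 4 * Real.sqrt (p * β * n) * (X.ncard : ℝ)
          ≤ (eCount G X (X ∪ extN G X) : ℝ) := by
        have hsum : (eCount G X (X ∪ extN G X) : ℝ)
            = ∑ u ∈ X.toFinite.toFinset, ((G.neighborSet u).ncard : ℝ) := by
          rw [eCount_union_extN]
          push_cast
          rfl
        have hbound : X.toFinite.toFinset.card • (4 * Real.sqrt (p * β * n))
            ≤ ∑ u ∈ X.toFinite.toFinset, ((G.neighborSet u).ncard : ℝ) :=
          Finset.card_nsmul_le_sum _ _ _ (fun u _ => hmin u)
        have hcard : (X.toFinite.toFinset.card : ℝ) = (X.ncard : ℝ) := by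
          rw [Set.ncard_eq_toFinset_card _ X.toFinite]
        rw [nsmul_eq_mul, hcard] at hbound
        rw [hsum]
        linarith
      have hj := hjumbled X (X ∪ extN G X)
      have hB : (eCount G X (X ∪ extN G X) : ℝ)
          ≤ p * (X.ncard : ℝ) * (((X ∪ extN G X)).ncard : ℝ)
            + β * Real.sqrt ((X.ncard : ℝ) * (((X ∪ extN G X)).ncard : ℝ)) := by
        have h' := (abs_le.mp hj).2
        push_cast at h'
        linarith
      exact caseII_arith p β n (X.ncard : ℝ) (((X ∪ extN G X)).ncard : ℝ)
        (eCount G X (X ∪ extN G X) : ℝ) hp hβ hn0 hpn hx1 hcase.le hs0 hs2 hA hB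
  · -- part (ii): joined
    intro X Y hdisj hcard hsize
    rw [hhalf] at hsize
    have hx0 : (0:ℝ) < (X.ncard : ℝ) :=
      lt_of_lt_of_le (div_pos (by linarith) hp) hsize
    have hx2β : 2 * β ≤ p * (X.ncard : ℝ) := by
      have := (div_le_iff₀ hp).mp hsize
      linarith
    have hj := hjumbled X Y
    rw [← hcard] at hj
    rw [Real.sqrt_mul_self (Nat.cast_nonneg X.ncard)] at hj
    have h' := (abs_le.mp hj).1
    have he : (0:ℝ) < (eCount G X Y : ℝ) := by nlinarith [h', hx2β, hx0, hβ]
    exact_mod_cast he
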